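/- arXiv:2510.05068 — 3 statements merged into one kernel-verified Lean document; each statement's English description precedes it below -/
import Mathlib

section
/- Let X_1, ..., X_N be 0-1 incidence vectors in F_q^K of sets P_1, ..., P_N ⊆ [K], where q is a prime greater than min_i |P_i|. With Q_{i,j} defined as in the CarPSI-ring recursion (Q_{1,1}=h, Q_{1,2}=h+X_1, Q_{i,j}=Q_{i-1,j}∘X_i+S_i), and answers A_j = Q_{N-1,j}^T X_N + s for j=1,2 (s ∈ F_q a common pad), the difference A_2 − A_1 equals |P_1 ∩ P_2 ∩ ... ∩ P_N| as an element of F_q, and since q > min_i |P_i| ≥ |∩_i P_i|, this determines the intersection cardinality exactly. -/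
/-- Correctness of CarPSI-ring: with `X i` the 0-1 incidence vector of
`P i ⊆ [K]`, the CarPSI-ring query chain, and answers
`A j = Q (N-1) j ⬝ X N + s`, the difference `A 1 - A 0` equals the cardinality
of `P 1 ∩ ... ∩ P N` as an element of `F_q`; since `q > min_i |P_i|`, this
cardinality is less than `q`, so it is determined exactly. -/
theorem stmt3 {q K N : ℕ} [Fact q.Prime] (hN : 2 ≤ N)
    (P : ℕ → Finset (Fin K))
    (hq : ∃ i ∈ Finset.Icc 1 N, (P i).card < q)
    (X : ℕ → (Fin K → ZMod q))
    (hX : ∀ i ∈ Finset.Icc 1 N, ∀ k, X i k = if k ∈ P i then 1 else 0)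
    (h : Fin K → ZMod q) (S : ℕ → (Fin K → ZMod q)) (s : ZMod q)
    (Q : ℕ → Fin 2 → (Fin K → ZMod q))
    (hQ10 : Q 1 0 = h) (hQ11 : Q 1 1 = h + X 1)
    (hrec : ∀ i, 2 ≤ i → i ≤ N - 1 → ∀ j, Q i j = Q (i-1) j * X i + S i)
    (A : Fin 2 → ZMod q)
    (hA : ∀ j, A j = (∑ k, Q (N-1) j k * X N k) + s) :
    A 1 - A 0 = (((Finset.Icc 1 N).inf P).card : ZMod q) ∧
      ((Finset.Icc 1 N).inf P).card < q := by
  have key : ∀ i, 1 ≤ i → i ≤ N - 1 → ∀ k,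
      Q i 1 k - Q i 0 k = ∏ j ∈ Finset.Icc 1 i, X j k := by
    intro i hi
    induction i, hi using Nat.le_induction with
    | base =>
      intro _ k
      simp [hQ10, hQ11]
    | succ i hi ih =>
      intro hle k
      have hle' : i ≤ N - 1 := Nat.le_of_succ_le hle
      have h2 : 2 ≤ i + 1 := by omega
      have e1 := hrec (i + 1) h2 hle 1
      have e0 := hrec (i + 1) h2 hle 0
      simp only [Nat.add_sub_cancel] at e1 e0
      rw [e1, e0, Finset.prod_Icc_succ_top (by omega : 1 ≤ i + 1), ← ih hle' k]
      simp [Pi.add_apply, Pi.mul_apply]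
      ring
  have hN1 : N - 1 + 1 = N := by omega
  have hdiff : A 1 - A 0 = ∑ k, ∏ j ∈ Finset.Icc 1 N, X j k := by
    rw [hA 1, hA 0]
    have : ∀ k : Fin K, ∏ j ∈ Finset.Icc 1 N, X j k
        = (∏ j ∈ Finset.Icc 1 (N - 1), X j k) * X N k := by
      intro k
      conv_lhs => rw [← hN1]
      rw [Finset.prod_Icc_succ_top (by omega : 1 ≤ N - 1 + 1), hN1]
    simp only [this]
    rw [add_sub_add_right_eq_sub, ← Finset.sum_sub_distrib]
    apply Finset.sum_congr rfl
    intro k _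
    rw [← sub_mul, key (N - 1) (by omega) le_rfl k]
  have hprod : ∀ k : Fin K, ∏ j ∈ Finset.Icc 1 N, X j k
      = if k ∈ (Finset.Icc 1 N).inf P then (1 : ZMod q) else 0 := by
    intro k
    by_cases hk : k ∈ (Finset.Icc 1 N).inf P
    · rw [if_pos hk]
      apply Finset.prod_eq_one
      intro j hj
      rw [hX j hj k, if_pos (Finset.mem_inf.mp hk j hj)]
    · rw [if_neg hk]
      rw [Finset.mem_inf] at hk
      push_neg at hk
      obtain ⟨j, hj, hkj⟩ := hk
      exact Finset.prod_eq_zero hj (by rw [hX j hj k, if_neg hkj])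
  constructor
  · rw [hdiff]
    simp only [hprod]
    rw [Finset.sum_ite_mem]
    simp
  · obtain ⟨i, hi, hiq⟩ := hq
    exact lt_of_le_of_lt (Finset.card_le_card (Finset.inf_le hi)) hiq
end

section
/- Fix positive integers N ≥ 2, T ≥ 1, K with Σ_{r=1}^T μ_r = K where each μ_r ≥ 1, and R ∈ [1, T]. If R < T and μ_R ≥ 1, the ring-setup DOFSP cost satisfies C_ring = 2N(Σ_{r=1}^R μ_r) + 2(R − Σ_{r=1}^{R−1} μ_r) ≤ 2NK = C_PSI,ring, i.e., the DOFSP scheme never costs more than ring PSI. -/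
/-- The DOFSP ring-setup scheme never costs more than ring PSI: if `R < T`,
then `C_ring = 2N(Σ_{r=1}^R μ_r) + 2(R - Σ_{r=1}^{R-1} μ_r) ≤ 2NK = C_PSI,ring`,
where `Σ_{r=1}^T μ_r = K` and each `μ_r ≥ 1`. -/
theorem stmt8 (N T R K : ℕ) (μ : ℕ → ℕ) (hN : 2 ≤ N) (hT : 1 ≤ T)
    (hμ : ∀ r ∈ Finset.Icc 1 T, 1 ≤ μ r)
    (hK : ∑ r ∈ Finset.Icc 1 T, μ r = K)
    (hR : 1 ≤ R) (hRT : R < T) (hμR : 1 ≤ μ R) :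
    2 * N * (∑ r ∈ Finset.Icc 1 R, (μ r : ℤ)) +
        2 * ((R : ℤ) - ∑ r ∈ Finset.Icc 1 (R - 1), (μ r : ℤ)) ≤ 2 * N * K := by
  -- sum over Icc 1 (R-1) is at least R-1
  have hsub1 : Finset.Icc 1 (R - 1) ⊆ Finset.Icc 1 T := by
    apply Finset.Icc_subset_Icc_right; omega
  have h1 : (R : ℕ) - 1 ≤ ∑ r ∈ Finset.Icc 1 (R - 1), μ r := by
    calc (R : ℕ) - 1 = (Finset.Icc 1 (R - 1)).card := by
          rw [Nat.card_Icc]; omega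
      _ ≤ ∑ r ∈ Finset.Icc 1 (R - 1), μ r :=
          Finset.card_nsmul_le_sum _ _ 1 (fun r hr => hμ r (hsub1 hr)) |>.trans_eq' (by simp)
  -- sum over Icc 1 R plus 1 is at most K
  have hsub2 : Finset.Icc 1 R ⊆ Finset.Icc 1 T := by
    apply Finset.Icc_subset_Icc_right; omega
  have h2 : (∑ r ∈ Finset.Icc 1 R, μ r) + 1 ≤ K := by
    have hins : insert (R+1) (Finset.Icc 1 R) ⊆ Finset.Icc 1 T := by
      intro x hx
      simp only [Finset.mem_insert, Finset.mem_Icc] at hx ⊢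
      omega
    have hnm : R + 1 ∉ Finset.Icc 1 R := by simp
    have := Finset.sum_le_sum_of_subset_of_nonneg hins
      (fun i _ _ => Nat.zero_le (μ i))
    rw [Finset.sum_insert hnm] at this
    have hμR1 : 1 ≤ μ (R+1) := hμ (R+1) (by simp; omega)
    omega
  have h1' : (R : ℤ) - 1 ≤ ∑ r ∈ Finset.Icc 1 (R - 1), (μ r : ℤ) := by
    push_cast
    have := (Nat.cast_le (α := ℤ)).2 h1
    push_cast at this
    omega
  have h2' : (∑ r ∈ Finset.Icc 1 R, (μ r : ℤ)) + 1 ≤ (K : ℤ) := by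
    have := (Nat.cast_le (α := ℤ)).2 h2
    push_cast at this
    exact this
  have hN' : (2 : ℤ) ≤ (N : ℤ) := by exact_mod_cast hN
  nlinarith [h1', h2', hN']
end

section
/- Let N_eff ≥ 2 and T ≥ 1. Define for even N_eff the sets R_j = {k·N_eff/2 + ⌈j/2⌉ : k ∈ [0 : ⌊2(T − ⌈j/2⌉)/N_eff⌋]} for j ∈ [1 : N_eff]. Then every round index r ∈ [1 : T] belongs to R_j for exactly two (adjacent, cyclically) values of j. -/
/-- Cyclic assignment of rounds to database pairs in the ring setup: for even
`N_eff ≥ 2` and `R_j = {k·N_eff/2 + ⌈j/2⌉ : k ∈ [0 : ⌊2(T - ⌈j/2⌉)/N_eff⌋]}`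
for `j ∈ [1 : N_eff]`, every round `r ∈ [1 : T]` belongs to `R_j` for exactly
two values of `j`. (In ℕ, `⌈j/2⌉ = (j+1)/2` and `⌊·⌋` is natural division.) -/
theorem stmt17 (Neff T : ℕ) (hNeff : 2 ≤ Neff) (heven : Even Neff) (hT : 1 ≤ T)
    (R : ℕ → Finset ℕ)
    (hR : ∀ j, R j =
      (Finset.range (2 * (T - (j + 1) / 2) / Neff + 1)).image
        (fun k => k * (Neff / 2) + (j + 1) / 2)) :
    ∀ r ∈ Finset.Icc 1 T,
      ((Finset.Icc 1 Neff).filter (fun j => r ∈ R j)).card = 2 := by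
  intro r hr
  simp only [Finset.mem_Icc] at hr
  obtain ⟨m, hm⟩ := heven
  subst hm
  have hm1 : 1 ≤ m := by omega
  have hmm : (m + m) / 2 = m := by omega
  set c := (r - 1) % m + 1 with hc
  have hmod : (r - 1) % m = c - 1 := by omega
  have hcm : c ≤ m := by
    have := Nat.mod_lt (r - 1) (show 0 < m by omega); omega
  have hdm := Nat.div_add_mod (r - 1) m
  set q := (r - 1) / m with hqdef
  rw [Nat.mul_comm] at hdm
  have hq : r = q * m + c := by omega
  have key : ∀ j, 1 ≤ j → j ≤ m + m → (r ∈ R j ↔ ((j + 1) / 2 = c)) := by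
    intro j hj1 hj2
    rw [hR]
    simp only [Finset.mem_image, Finset.mem_range, hmm]
    constructor
    · rintro ⟨k, hk, hkr⟩
      have hd1 : 1 ≤ (j + 1) / 2 := by omega
      have hd2 : (j + 1) / 2 ≤ m := by omega
      have hr1 : r - 1 = ((j + 1) / 2 - 1) + k * m := by omega
      have : (r - 1) % m = (j + 1) / 2 - 1 := by
        rw [hr1, Nat.add_mul_mod_self_right, Nat.mod_eq_of_lt (by omega)]
      omega
    · intro hd
      refine ⟨q, ?_, by rw [hd]; omega⟩
      have h2 : 2 * (T - (j + 1) / 2) / (m + m) = (T - c) / m := by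
        rw [hd, show m + m = 2 * m by ring,
          Nat.mul_div_mul_left _ _ (by norm_num)]
      rw [h2]
      have hle : q * m ≤ T - c := by omega
      have := (Nat.le_div_iff_mul_le (show 0 < m by omega)).mpr hle
      omega
  have hfilter : (Finset.Icc 1 (m + m)).filter (fun j => r ∈ R j)
      = {2 * c - 1, 2 * c} := by
    ext j
    simp only [Finset.mem_filter, Finset.mem_Icc, Finset.mem_insert,
      Finset.mem_singleton]
    constructor
    · rintro ⟨⟨h1, h2⟩, hrj⟩
      have := (key j h1 h2).mp hrj
      omega
    · intro h
      have hj1 : 1 ≤ j := by omega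
      have hj2 : j ≤ m + m := by omega
      exact ⟨⟨hj1, hj2⟩, (key j hj1 hj2).mpr (by omega)⟩
  rw [hfilter, Finset.card_insert_of_notMem (by simp; omega),
    Finset.card_singleton]
end
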